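/- Let G be a connected graph with BFS layering from s and layering tree 𝒯 whose parts all have diameter at most ℓ in G. Let P be a part at layer k and let i ≥ k. Then the number of vertices of comp(P) lying in layers L_0, ..., L_i is at most Δ^{ℓ + i - k + 2}, where Δ ≥ 2 is the maximum degree of G. -/
import Mathlib


/-- `ReachWithin G S u v`: there is a `u`-`v` walk in `G` all of whose vertices lie in `S`. -/
def ReachWithin {V : Type*} (G : SimpleGraph V) (S : Set V) (u v : V) : Prop :=
  ∃ p : G.Walk u v, ∀ x ∈ p.support, x ∈ S

section Aux

variable {V : Type*} {G : SimpleGraph V}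

/-- If `dist s v = m + 1` then `v` has a neighbor at distance `m` from `s`. -/
lemma exists_adj_dist_pred (hconn : G.Connected) {s v : V} {m : ℕ}
    (h : G.dist s v = m + 1) : ∃ x, G.Adj x v ∧ G.dist s x = m := by
  obtain ⟨p, hp⟩ := (hconn s v).exists_walk_length_eq_dist
  have hne : v ≠ s := by
    rintro rfl
    simp [SimpleGraph.dist_self] at h
  obtain ⟨x, hadj, q, heq⟩ := (p.reverse).exists_eq_cons_of_ne hne
  have hq : q.length = m := by
    have hl : p.reverse.length = m + 1 := by
      rw [SimpleGraph.Walk.length_reverse, hp, h]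
    rw [heq] at hl
    simpa using hl
  refine ⟨x, hadj.symm, le_antisymm ?_ ?_⟩
  · have := SimpleGraph.dist_le q.reverse
    rwa [SimpleGraph.Walk.length_reverse, hq] at this
  · have htri : G.dist s v ≤ G.dist s x + G.dist x v := hconn.dist_triangle
    have hxv : G.dist x v ≤ 1 := by
      rw [SimpleGraph.dist_eq_one_iff_adj.mpr hadj.symm]
    omega

variable [Fintype V] [DecidableRel G.Adj]

open Finset in
/-- Sphere cardinality bound. -/
lemma sphere_card_le (hconn : G.Connected) {Δ : ℕ} (hΔ : G.maxDegree ≤ Δ) (c : V) :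
    ∀ r : ℕ, (Finset.univ.filter fun v => G.dist c v = r).card ≤ Δ ^ r := by
  classical
  intro r
  induction r with
  | zero =>
    have : (Finset.univ.filter fun v => G.dist c v = 0) ⊆ {c} := by
      intro v hv
      simp only [mem_filter] at hv
      have := (hconn.dist_eq_zero_iff).mp hv.2
      simp [this.symm]
    simpa using Finset.card_le_card this
  | succ r ih =>
    have hsub : (Finset.univ.filter fun v => G.dist c v = r + 1) ⊆
        (Finset.univ.filter fun v => G.dist c v = r).biUnion (fun x => G.neighborFinset x) := by
      intro v hv
      simp only [mem_filter] at hv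
      obtain ⟨x, hadj, hx⟩ := exists_adj_dist_pred hconn hv.2
      refine Finset.mem_biUnion.mpr ⟨x, by simp [hx], ?_⟩
      simpa [SimpleGraph.mem_neighborFinset] using hadj
    calc (Finset.univ.filter fun v => G.dist c v = r + 1).card
        ≤ ((Finset.univ.filter fun v => G.dist c v = r).biUnion
            (fun x => G.neighborFinset x)).card := Finset.card_le_card hsub
      _ ≤ ∑ x ∈ (Finset.univ.filter fun v => G.dist c v = r),
            (G.neighborFinset x).card := Finset.card_biUnion_le
      _ ≤ ∑ _x ∈ (Finset.univ.filter fun v => G.dist c v = r), Δ := by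
          refine Finset.sum_le_sum fun x _ => ?_
          rw [SimpleGraph.card_neighborFinset_eq_degree]
          exact le_trans (G.degree_le_maxDegree x) hΔ
      _ = (Finset.univ.filter fun v => G.dist c v = r).card * Δ := by
          rw [Finset.sum_const, smul_eq_mul]
      _ ≤ Δ ^ r * Δ := Nat.mul_le_mul_right _ ih
      _ = Δ ^ (r + 1) := by ring

lemma geom_sum_le {Δ : ℕ} (hΔ2 : 2 ≤ Δ) : ∀ r : ℕ, ∑ d ∈ Finset.range (r + 1), Δ ^ d ≤ Δ ^ (r + 1)
  | 0 => by simpa using le_trans (by norm_num) hΔ2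
  | r + 1 => by
    rw [Finset.sum_range_succ]
    have := geom_sum_le hΔ2 r
    have h2 : 2 * Δ ^ (r + 1) ≤ Δ * Δ ^ (r + 1) := Nat.mul_le_mul_right _ hΔ2
    calc ∑ d ∈ Finset.range (r + 1), Δ ^ d + Δ ^ (r + 1) ≤ Δ ^ (r + 1) + Δ ^ (r + 1) := by omega
      _ = 2 * Δ ^ (r + 1) := by ring
      _ ≤ Δ * Δ ^ (r + 1) := h2
      _ = Δ ^ (r + 2) := by ring

open Finset in
/-- Ball cardinality bound. -/
lemma ball_card_le (hconn : G.Connected) {Δ : ℕ} (hΔ2 : 2 ≤ Δ) (hΔ : G.maxDegree ≤ Δ) (c : V)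
    (r : ℕ) : (Finset.univ.filter fun v => G.dist c v ≤ r).card ≤ Δ ^ (r + 1) := by
  classical
  have hsub : (Finset.univ.filter fun v => G.dist c v ≤ r) ⊆
      (Finset.range (r + 1)).biUnion (fun d => Finset.univ.filter fun v => G.dist c v = d) := by
    intro v hv
    simp only [mem_filter] at hv
    exact Finset.mem_biUnion.mpr ⟨G.dist c v, by simp [Nat.lt_succ_of_le hv.2], by simp⟩
  calc (Finset.univ.filter fun v => G.dist c v ≤ r).card
      ≤ _ := Finset.card_le_card hsub
    _ ≤ ∑ d ∈ Finset.range (r + 1), (Finset.univ.filter fun v => G.dist c v = d).card :=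
        Finset.card_biUnion_le
    _ ≤ ∑ d ∈ Finset.range (r + 1), Δ ^ d :=
        Finset.sum_le_sum fun d _ => sphere_card_le hconn hΔ c d
    _ ≤ Δ ^ (r + 1) := geom_sum_le hΔ2 r

/-- Descend within the component to layer `k`. -/
lemma descend_to_layer (hconn : G.Connected) (s : V) (k : ℕ) (u : V) :
    ∀ j v, G.dist s v = k + j → ReachWithin G {x | k ≤ G.dist s x} u v →
      ∃ w, G.dist s w = k ∧ ReachWithin G {x | k ≤ G.dist s x} u w ∧ G.dist w v ≤ j := by
  intro j
  induction j with
  | zero => exact fun v hv hr => ⟨v, by simpa using hv, hr, by simp [SimpleGraph.dist_self]⟩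
  | succ j ih =>
    intro v hv hr
    obtain ⟨x, hadj, hx⟩ := exists_adj_dist_pred hconn (by omega : G.dist s v = (k + j) + 1)
    obtain ⟨p, hp⟩ := hr
    have hrx : ReachWithin G {x | k ≤ G.dist s x} u x := by
      refine ⟨p.concat hadj.symm, ?_⟩
      intro y hy
      rw [SimpleGraph.Walk.support_concat] at hy
      simp only [List.concat_eq_append, List.mem_append, List.mem_singleton] at hy
      rcases hy with hy | hy
      · exact hp y hy
      · simp only [Set.mem_setOf_eq, hy]
        omega
    obtain ⟨w, hw, hrw, hwx⟩ := ih x hx hrx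
    refine ⟨w, hw, hrw, ?_⟩
    have htri : G.dist w v ≤ G.dist w x + G.dist x v := hconn.dist_triangle
    have hxv : G.dist x v ≤ 1 := by rw [SimpleGraph.dist_eq_one_iff_adj.mpr hadj]
    omega

end Aux

/-- If every part of the BFS layering of `G` from `s` has `G`-diameter at most `ℓ`, `G`
has maximum degree at most `Δ` with `Δ ≥ 2`, and `P` is the part at layer `k` containing
`u`, then the number of vertices of `comp(P)` (the component of `G` minus the first `k`
layers containing `u`) lying in layers `0, …, i` is at most `Δ ^ (ℓ + (i - k) + 2)`. -/
theorem comp_inter_low_layers_card_le {V : Type*} [Fintype V] (G : SimpleGraph V)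
    [DecidableRel G.Adj] (hconn : G.Connected) (s : V) (Δ ℓ : ℕ) (hΔ2 : 2 ≤ Δ)
    (hΔ : G.maxDegree ≤ Δ)
    (hparts : ∀ (m : ℕ) (a b : V), G.dist s a = m → G.dist s b = m →
      ReachWithin G {x | m ≤ G.dist s x} a b → G.dist a b ≤ ℓ)
    (k i : ℕ) (hik : k ≤ i) (u : V) (hu : G.dist s u = k) :
    {v : V | ReachWithin G {x | k ≤ G.dist s x} u v ∧ G.dist s v ≤ i}.ncard
      ≤ Δ ^ (ℓ + (i - k) + 2) := by
  classical
  set R : ℕ := ℓ + (i - k) with hR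
  -- every vertex in the set is within distance R of u
  have hsub : {v : V | ReachWithin G {x | k ≤ G.dist s x} u v ∧ G.dist s v ≤ i} ⊆
      {v : V | G.dist u v ≤ R} := by
    rintro v ⟨hrv, hvi⟩
    have hvS : k ≤ G.dist s v := by
      obtain ⟨p, hp⟩ := hrv
      exact hp v p.end_mem_support
    obtain ⟨j, hj⟩ : ∃ j, G.dist s v = k + j ∧ j ≤ i - k := ⟨G.dist s v - k, by omega⟩
    obtain ⟨w, hw, hrw, hwv⟩ := descend_to_layer hconn s k u j v hj.1 hrv
    have huw : G.dist u w ≤ ℓ := hparts k u w hu hw hrw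
    have htri : G.dist u v ≤ G.dist u w + G.dist w v := hconn.dist_triangle
    simp only [Set.mem_setOf_eq, hR]
    omega
  have h1 : {v : V | ReachWithin G {x | k ≤ G.dist s x} u v ∧ G.dist s v ≤ i}.ncard
      ≤ {v : V | G.dist u v ≤ R}.ncard :=
    Set.ncard_le_ncard hsub (Set.toFinite _)
  have h2 : {v : V | G.dist u v ≤ R}.ncard
      = (Finset.univ.filter fun v => G.dist u v ≤ R).card := by
    rw [Set.ncard_eq_toFinset_card']
    congr 1
    ext v
    simp
  have h3 := ball_card_le hconn hΔ2 hΔ u R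
  have h4 : Δ ^ (R + 1) ≤ Δ ^ (R + 2) :=
    Nat.pow_le_pow_right (by omega) (by omega)
  calc {v : V | ReachWithin G {x | k ≤ G.dist s x} u v ∧ G.dist s v ≤ i}.ncard
      ≤ {v : V | G.dist u v ≤ R}.ncard := h1
    _ = _ := h2
    _ ≤ Δ ^ (R + 1) := h3
    _ ≤ Δ ^ (R + 2) := h4
    _ = Δ ^ (ℓ + (i - k) + 2) := by rw [hR]
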